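/- For every integer s ≥ 2 there is a constant C > 0 such that for all sufficiently large m there exists an s-edge-colouring of K_m in which every vertex subset of size at least C·log m contains, for each colour i ∈ {1,…,s}, a pair of vertices coloured i; in particular, every homogeneous set of this colouring has size less than C·log m. -/

import Mathlib

open Finset

lemma aux_pow_lb (a n : ℕ) : a^(n+1) + (n+1) * a^n ≤ (a+1)^(n+1) := by
  induction n with
  | zero => simp [pow_succ]
  | succ n ih =>
    have e1 : a^(n+1+1) = a * a^(n+1) := by ring
    have e2 : a^(n+1) = a * a^n := by ring
    have key : a^(n+1+1) + (n+1+1)*a^(n+1) ≤ (a+1)*(a^(n+1)+(n+1)*a^n) := by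
      have e3 : (a+1)*(a^(n+1)+(n+1)*a^n) = (a^(n+1+1) + (n+1+1)*a^(n+1)) + (n+1)*a^n := by ring
      omega
    calc a^(n+1+1) + (n+1+1)*a^(n+1) ≤ (a+1)*(a^(n+1)+(n+1)*a^n) := key
      _ ≤ (a+1)*(a+1)^(n+1) := Nat.mul_le_mul_left _ ih
      _ = (a+1)^(n+1+1) := by ring

lemma aux_two_mul (s : ℕ) (hs : 2 ≤ s) : 2 * (s-1)^s ≤ s^s := by
  obtain ⟨a, rfl⟩ : ∃ a, s = a + 1 := ⟨s - 1, by omega⟩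
  simp only [Nat.add_sub_cancel]
  have h1 := aux_pow_lb a a
  have e2 : a^(a+1) = a * a^a := by ring
  have h2 : a * a^a ≤ (a+1) * a^a := Nat.mul_le_mul_right _ (by omega)
  nlinarith

lemma aux_num (s L k : ℕ) (hs : 2 ≤ s) (hL : 16 ≤ L) (hk : 16 * s * L ≤ k) :
    (((L+1)*(k+1)+1)*s)*2 ≤ k * (k-1) := by
  have hk1 : 64 ≤ k := by nlinarith
  obtain ⟨b, rfl⟩ : ∃ b, k = b + 1 := ⟨k - 1, by omega⟩
  simp only [Nat.add_sub_cancel]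
  have h1 : (L+1)*(b+1+1)+1 ≤ 4*L*(b+1) := by nlinarith
  have h2 : 8*s*L ≤ b := by nlinarith
  calc ((L+1)*(b+1+1)+1)*s*2 ≤ (4*L*(b+1))*s*2 := by
        exact Nat.mul_le_mul_right _ (Nat.mul_le_mul_right _ h1)
    _ ≤ (b+1)*b := by nlinarith

section
variable {m s : ℕ}

-- off-diagonal pairs inside X
noncomputable def edgesIn (X : Finset (Fin m)) : Finset (Sym2 (Fin m)) :=
  by classical exact X.sym2.filter (fun e => ¬ e.IsDiag)

lemma edgesIn_card_lb (X : Finset (Fin m)) : X.card * (X.card - 1) ≤ 2 * (edgesIn X).card := by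
  classical
  have himg : X.offDiag.image (fun p => s(p.1, p.2)) ⊆ edgesIn X := by
    intro e he
    simp only [mem_image] at he
    obtain ⟨⟨x, y⟩, hxy, rfl⟩ := he
    rw [Finset.mem_offDiag] at hxy
    rw [edgesIn]
    simp only [mem_filter, mk_mem_sym2_iff, Sym2.isDiag_iff_proj_eq]
    exact ⟨⟨hxy.1, hxy.2.1⟩, hxy.2.2⟩
  have hfib : X.offDiag.card ≤ 2 * (X.offDiag.image (fun p => s(p.1, p.2))).card := by
    apply Finset.card_le_mul_card_image
    intro b hb
    simp only [mem_image] at hb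
    obtain ⟨⟨x, y⟩, hxy, rfl⟩ := hb
    have hsub : X.offDiag.filter (fun p => s(p.1, p.2) = s(x, y)) ⊆ {(x, y), (y, x)} := by
      intro ⟨u, v⟩ huv
      simp only [mem_filter, Sym2.eq, Sym2.rel_iff', Prod.mk.injEq] at huv
      simp only [mem_insert, mem_singleton, Prod.mk.injEq]
      rcases huv.2 with h | h
      · left; exact ⟨h.1, h.2⟩
      · right
        have := Prod.ext_iff.mp h
        simp at this
        exact ⟨this.1, this.2⟩
    calc (X.offDiag.filter (fun p => s(p.1, p.2) = s(x, y))).card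
        ≤ ({(x, y), (y, x)} : Finset (Fin m × Fin m)).card := Finset.card_le_card hsub
      _ ≤ 2 := Finset.card_insert_le _ _ |>.trans (by simp)
  have := Finset.card_le_card himg
  have hoff : X.offDiag.card = X.card * X.card - X.card := Finset.offDiag_card _
  have : X.card * X.card - X.card ≤ 2 * (edgesIn X).card := by omega
  have hmul : X.card * (X.card - 1) = X.card * X.card - X.card := by
    rw [Nat.mul_sub, Nat.mul_one]
  omega

end

section
variable {m s : ℕ}

noncomputable def badset (i : Fin s) (X : Finset (Fin m)) : Finset (Sym2 (Fin m) → Fin s) :=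
  by classical exact
    Fintype.piFinset (fun e => if e ∈ edgesIn X then Finset.univ.erase i else Finset.univ)

lemma mem_badset {i : Fin s} {X : Finset (Fin m)} {c : Sym2 (Fin m) → Fin s} :
    c ∈ badset i X ↔ ∀ e ∈ edgesIn X, c e ≠ i := by
  classical
  rw [badset]
  simp only [Fintype.mem_piFinset]
  constructor
  · intro h e he
    have := h e
    rw [if_pos he] at this
    exact (Finset.mem_erase.mp this).1
  · intro h e
    by_cases he : e ∈ edgesIn X
    · rw [if_pos he]; exact Finset.mem_erase.mpr ⟨h e he, Finset.mem_univ _⟩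
    · rw [if_neg he]; exact Finset.mem_univ _

lemma badset_card (i : Fin s) (X : Finset (Fin m)) :
    (badset i X).card
      = (s-1)^(edgesIn X).card * s^(Fintype.card (Sym2 (Fin m)) - (edgesIn X).card) := by
  classical
  rw [badset]
  rw [Fintype.card_piFinset]
  have h1 : ∀ e : Sym2 (Fin m),
      ((if e ∈ edgesIn X then Finset.univ.erase i else Finset.univ).card)
        = if e ∈ edgesIn X then s - 1 else s := by
    intro e
    by_cases he : e ∈ edgesIn X <;>
      simp [he, Finset.card_erase_of_mem, Finset.card_univ]
  simp only [h1]
  rw [Finset.prod_ite]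
  rw [Finset.prod_const, Finset.prod_const]
  rw [Finset.filter_univ_mem]
  congr 1
  rw [Finset.filter_not, Finset.filter_univ_mem, Finset.card_sdiff_of_subset (Finset.subset_univ _),
    Finset.card_univ]

end

lemma exists_good (m s k K : ℕ) (hs : 2 ≤ s)
    (hK : ∀ X : Finset (Fin m), X.card = k → K ≤ (edgesIn X).card)
    (hKE : K ≤ Fintype.card (Sym2 (Fin m)))
    (hsmall : m.choose k * s * (s-1)^K < s^K) :
    ∃ c : Sym2 (Fin m) → Fin s, ∀ X : Finset (Fin m), X.card = k → ∀ i : Fin s,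
      ∃ e ∈ edgesIn X, c e = i := by
  classical
  set E := Fintype.card (Sym2 (Fin m)) with hE
  set S := ((Finset.univ : Finset (Fin m)).powersetCard k) ×ˢ (Finset.univ : Finset (Fin s)) with hS
  set Bad := S.biUnion (fun p => badset p.2 p.1) with hBad
  have hterm : ∀ p ∈ S, (badset p.2 p.1).card ≤ (s-1)^K * s^(E-K) := by
    rintro ⟨X, i⟩ hp
    rw [Finset.mem_product, Finset.mem_powersetCard_univ] at hp
    have hXk : X.card = k := hp.1
    set t := (edgesIn X).card with ht
    have h1 : K ≤ t := hK X hXk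
    have h2 : t ≤ E := by
      rw [hE, ← Finset.card_univ]; exact Finset.card_le_univ _
    rw [badset_card]
    calc (s-1)^t * s^(E-t) = (s-1)^K * ((s-1)^(t-K) * s^(E-t)) := by
          rw [← mul_assoc, ← pow_add]; congr 2; omega
      _ ≤ (s-1)^K * (s^(t-K) * s^(E-t)) := by
          exact Nat.mul_le_mul_left _ (Nat.mul_le_mul_right _ (Nat.pow_le_pow_left (by omega) _))
      _ = (s-1)^K * s^(E-K) := by rw [← pow_add]; congr 2; omega
  have hScard : S.card = m.choose k * s := by
    rw [hS, Finset.card_product, Finset.card_powersetCard, Finset.card_univ, Finset.card_univ,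
      Fintype.card_fin, Fintype.card_fin]
  have hb : Bad.card ≤ m.choose k * s * ((s-1)^K * s^(E-K)) := by
    calc Bad.card ≤ ∑ p ∈ S, (badset p.2 p.1).card := Finset.card_biUnion_le
      _ ≤ ∑ _p ∈ S, (s-1)^K * s^(E-K) := Finset.sum_le_sum hterm
      _ = S.card * ((s-1)^K * s^(E-K)) := by rw [Finset.sum_const, smul_eq_mul]
      _ = _ := by rw [hScard]
  have hlt : Bad.card < Fintype.card (Sym2 (Fin m) → Fin s) := by
    have hcf : Fintype.card (Sym2 (Fin m) → Fin s) = s^E := by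
      rw [Fintype.card_fun, Fintype.card_fin]
    rw [hcf]
    have hsplit : s^E = s^K * s^(E-K) := by rw [← pow_add]; congr 1; omega
    rw [hsplit]
    calc Bad.card ≤ m.choose k * s * ((s-1)^K * s^(E-K)) := hb
      _ = (m.choose k * s * (s-1)^K) * s^(E-K) := by ring
      _ < s^K * s^(E-K) := by
          have hpos : 0 < s^(E-K) := Nat.pow_pos (by omega)
          exact Nat.mul_lt_mul_of_lt_of_le hsmall (le_refl _) hpos
  have hc : ∃ c, c ∉ Bad := by
    by_contra h
    push_neg at h
    have hsub : (Finset.univ : Finset (Sym2 (Fin m) → Fin s)) ⊆ Bad := fun c _ => h c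
    have := Finset.card_le_card hsub
    rw [Finset.card_univ] at this
    omega
  obtain ⟨c, hc⟩ := hc
  refine ⟨c, fun X hXk i => ?_⟩
  have hmem : (X, i) ∈ S := by
    rw [hS, Finset.mem_product, Finset.mem_powersetCard_univ]
    exact ⟨hXk, Finset.mem_univ _⟩
  have : c ∉ badset i X := fun hcb => hc (Finset.mem_biUnion.mpr ⟨(X, i), hmem, hcb⟩)
  rw [mem_badset] at this
  push_neg at this
  obtain ⟨e, he, hce⟩ := this
  exact ⟨e, he, hce⟩

theorem stmt13 (s : ℕ) (hs : 2 ≤ s) :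
    ∃ C : ℝ, 0 < C ∧ ∃ M : ℕ, ∀ m : ℕ, M ≤ m →
      ∃ c : Sym2 (Fin m) → Fin s,
        ∀ X : Finset (Fin m), C * Real.logb 2 m ≤ (X.card : ℝ) →
          ∀ i : Fin s, ∃ x ∈ X, ∃ y ∈ X, x ≠ y ∧ c s(x, y) = i := by
  have hs0 : (0:ℝ) < s := by exact_mod_cast (by omega : 0 < s)
  refine ⟨16 * s, by linarith, 65536 + s, fun m hm => ?_⟩
  have hm0 : m ≠ 0 := by omega
  set L := Nat.log 2 m with hLdef
  have hL16 : 16 ≤ L := by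
    rw [hLdef]
    exact (Nat.le_log_iff_pow_le (by norm_num) hm0).mpr (by norm_num; omega)
  set k := ⌈(16 * (s:ℝ)) * Real.logb 2 m⌉₊ with hkdef
  have hlogL : (L : ℝ) ≤ Real.logb 2 m := by
    have h2L : ((2:ℝ))^L ≤ (m:ℝ) := by
      exact_mod_cast Nat.pow_log_le_self 2 hm0
    have : Real.logb 2 ((2:ℝ)^L) ≤ Real.logb 2 m :=
      Real.logb_le_logb_of_le (by norm_num) (pow_pos (by norm_num) L) h2L
    rwa [Real.logb_pow, Real.logb_self_eq_one (by norm_num), mul_one] at this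
  have hkL : 16 * s * L ≤ k := by
    have h1 : ((16 * s * L : ℕ) : ℝ) ≤ (16 * (s:ℝ)) * Real.logb 2 m := by
      push_cast
      have := mul_le_mul_of_nonneg_left hlogL (by positivity : (0:ℝ) ≤ 16 * (s:ℝ))
      linarith
    have h2 : ((16 * s * L : ℕ) : ℝ) ≤ (k:ℝ) := by
      rw [hkdef]
      exact h1.trans (Nat.le_ceil _)
    exact_mod_cast h2
  by_cases hkm : k ≤ m
  · -- counting case
    set q := (L+1)*(k+1)+1 with hqdef
    set K := q * s with hKdef
    have hnum : K * 2 ≤ k * (k-1) := aux_num s L k hs hL16 hkL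
    have hK : ∀ X : Finset (Fin m), X.card = k → K ≤ (edgesIn X).card := by
      intro X hX
      have := edgesIn_card_lb X
      rw [hX] at this
      omega
    have hmcard : (Finset.univ : Finset (Fin m)).card = m := by
      rw [Finset.card_univ, Fintype.card_fin]
    have hKE : K ≤ Fintype.card (Sym2 (Fin m)) := by
      obtain ⟨X₀, _, hX₀⟩ := Finset.exists_subset_card_eq
        (show k ≤ (Finset.univ : Finset (Fin m)).card by rw [hmcard]; exact hkm)
      have h1 := hK X₀ hX₀
      have h2 : (edgesIn X₀).card ≤ Fintype.card (Sym2 (Fin m)) :=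
        Finset.card_le_univ _
      omega
    have hsmall : m.choose k * s * (s-1)^K < s^K := by
      have h2q : m.choose k * s < 2^q := by
        have c1 : m.choose k ≤ m^k := Nat.choose_le_pow m k
        have c2 : s ≤ m := by omega
        have c3 : m < 2^(L+1) := Nat.lt_pow_succ_log_self (by norm_num) m
        have c4 : m.choose k * s ≤ m^(k+1) := by
          calc m.choose k * s ≤ m^k * m := Nat.mul_le_mul c1 c2
            _ = m^(k+1) := by ring
        have c5 : m^(k+1) ≤ (2^(L+1))^(k+1) := Nat.pow_le_pow_left (le_of_lt c3) _
        have c6 : (2^(L+1))^(k+1) = 2^((L+1)*(k+1)) := by rw [← pow_mul]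
        have c7 : (2:ℕ)^((L+1)*(k+1)) < 2^q :=
          Nat.pow_lt_pow_right (by norm_num) (by omega)
        omega
      have hss : 2*(s-1)^s ≤ s^s := aux_two_mul s hs
      have hKpow : 2^q * (s-1)^K ≤ s^K := by
        calc 2^q * (s-1)^K = 2^q * ((s-1)^s)^q := by
              rw [hKdef, mul_comm q s, pow_mul]
          _ = (2 * (s-1)^s)^q := by rw [mul_pow]
          _ ≤ (s^s)^q := Nat.pow_le_pow_left hss q
          _ = s^K := by rw [hKdef, mul_comm q s, pow_mul]
      have hpos : 0 < (s-1)^K := Nat.pow_pos (by omega)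
      calc m.choose k * s * (s-1)^K < 2^q * (s-1)^K :=
            Nat.mul_lt_mul_of_lt_of_le h2q (le_refl _) hpos
        _ ≤ s^K := hKpow
    obtain ⟨c, hc⟩ := exists_good m s k K hs hK hKE hsmall
    refine ⟨c, fun X hX i => ?_⟩
    have hkX : k ≤ X.card := Nat.ceil_le.mpr hX
    obtain ⟨X', hX'sub, hX'card⟩ := Finset.exists_subset_card_eq hkX
    obtain ⟨e, he, hce⟩ := hc X' hX'card i
    revert he hce
    induction e using Sym2.ind with
    | _ x y =>
      intro he hce
      rw [edgesIn, Finset.mem_filter, mk_mem_sym2_iff, Sym2.mk_isDiag_iff] at he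
      exact ⟨x, hX'sub he.1.1, y, hX'sub he.1.2, he.2, hce⟩
  · -- degenerate case: no set of size k exists
    refine ⟨fun _ => ⟨0, by omega⟩, fun X hX i => absurd (Nat.ceil_le.mpr hX) ?_⟩
    have : X.card ≤ m := by
      have := Finset.card_le_univ X
      rwa [Fintype.card_fin] at this
    omega
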